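/- arXiv:2106.00384 — 10 statements merged into one kernel-verified Lean document; each statement's English description precedes it below -/
import Mathlib

section
/- In the classic SIR model, solutions starting in the domain D = {(s,i,r) : s > 0, i > 0, r ≥ 0, s+i+r ≤ 1} remain in D for all t ≥ 0. -/
/-- If `f' = a · f` on `[0,∞)` with `a` continuous there and `f 0 > 0`,
then `f` stays positive on `[0,∞)`. -/
lemma pos_of_linear_ode (f a : ℝ → ℝ) (hf0 : 0 < f 0)
    (hf : ∀ t, 0 ≤ t → HasDerivAt f (a t * f t) t)
    (ha : ∀ t, 0 ≤ t → ContinuousAt a t) :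
    ∀ t, 0 ≤ t → 0 < f t := by
  set b : ℝ → ℝ := fun x => a (max x 0) with hb
  have hbc : Continuous b := by
    rw [continuous_iff_continuousAt]
    intro x
    have : ContinuousAt (fun y : ℝ => a (max y 0)) x :=
      ContinuousAt.comp (x := x) (g := a) (ha (max x 0) (le_max_right _ _))
        ((continuous_id.max continuous_const).continuousAt)
    exact this
  set A : ℝ → ℝ := fun t => ∫ x in (0:ℝ)..t, b x with hA
  have hAd : ∀ t : ℝ, HasDerivAt A (b t) t := fun t =>
    (hbc.integral_hasStrictDerivAt 0 t).hasDerivAt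
  set g : ℝ → ℝ := fun t => f t * Real.exp (-A t) with hg
  have hgd : ∀ t, 0 ≤ t → HasDerivAt g 0 t := by
    intro t ht
    have h1 : HasDerivAt (fun u => Real.exp (-A u)) (Real.exp (-A t) * (-b t)) t :=
      (((hAd t).neg).exp)
    have h2 := (hf t ht).mul h1
    have hbt : b t = a t := by simp [hb, max_eq_left ht]
    refine h2.congr_deriv ?_
    rw [hbt]; ring
  intro t ht
  have hconst : g t = g 0 := by
    have := constant_of_has_deriv_right_zero (f := g) (a := 0) (b := t)
      (fun x hx => ((hf x hx.1).mul ((hAd x).neg.exp)).continuousAt.continuousWithinAt)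
      (fun x hx => (hgd x hx.1).hasDerivWithinAt)
    exact this t (Set.mem_Icc.mpr ⟨ht, le_rfl⟩)
  have hg0 : g 0 = f 0 * Real.exp (-A 0) := rfl
  have hgpos : 0 < g t := by
    rw [hconst, hg0]
    positivity
  have : g t = f t * Real.exp (-A t) := rfl
  nlinarith [Real.exp_pos (-A t), hgpos]

/-- Solutions of SIR starting in D = {s>0, i>0, r≥0, s+i+r ≤ 1} remain in D. -/
theorem sir_invariant_domain
    (β γ : ℝ) (hβ : 0 < β) (hγ : 0 < γ)
    (s i r : ℝ → ℝ)
    (hs0 : 0 < s 0) (hi0 : 0 < i 0) (hr0 : 0 ≤ r 0)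
    (hsum : s 0 + i 0 + r 0 ≤ 1)
    (hs : ∀ t, 0 ≤ t → HasDerivAt s (-β * s t * i t) t)
    (hi : ∀ t, 0 ≤ t → HasDerivAt i (i t * (β * s t - γ)) t)
    (hr : ∀ t, 0 ≤ t → HasDerivAt r (γ * i t) t) :
    ∀ t, 0 ≤ t → 0 < s t ∧ 0 < i t ∧ 0 ≤ r t ∧ s t + i t + r t ≤ 1 := by
  have hscont : ∀ t, 0 ≤ t → ContinuousAt s t := fun t ht => (hs t ht).continuousAt
  have hicont : ∀ t, 0 ≤ t → ContinuousAt i t := fun t ht => (hi t ht).continuousAt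
  have hspos : ∀ t, 0 ≤ t → 0 < s t := by
    apply pos_of_linear_ode s (fun t => -β * i t) hs0
    · intro t ht
      have := hs t ht
      convert this using 1; ring
    · intro t ht
      exact (continuousAt_const.mul (hicont t ht))
  have hipos : ∀ t, 0 ≤ t → 0 < i t := by
    apply pos_of_linear_ode i (fun t => β * s t - γ) hi0
    · intro t ht
      have := hi t ht
      convert this using 1; ring
    · intro t ht
      exact (continuousAt_const.mul (hscont t ht)).sub continuousAt_const
  have hrmono : ∀ t, 0 ≤ t → r 0 ≤ r t := by
    intro t ht
    rcases eq_or_lt_of_le ht with h | h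
    · rw [← h]
    have : MonotoneOn r (Set.Icc 0 t) := by
      apply monotoneOn_of_deriv_nonneg (convex_Icc 0 t)
      · exact fun x hx => ((hr x hx.1).continuousAt).continuousWithinAt
      · intro x hx
        rw [interior_Icc] at hx
        exact (hr x hx.1.le).differentiableAt.differentiableWithinAt
      · intro x hx
        rw [interior_Icc] at hx
        rw [(hr x hx.1.le).deriv]
        exact mul_nonneg hγ.le (hipos x hx.1.le).le
    exact this (Set.mem_Icc.mpr ⟨le_rfl, ht⟩) (Set.mem_Icc.mpr ⟨ht, le_rfl⟩) ht
  have hsumconst : ∀ t, 0 ≤ t → s t + i t + r t = s 0 + i 0 + r 0 := by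
    intro t ht
    have hud : ∀ x, 0 ≤ x → HasDerivAt (fun u => s u + i u + r u) 0 x := by
      intro x hx
      have := ((hs x hx).add (hi x hx)).add (hr x hx)
      refine this.congr_deriv ?_; ring
    exact constant_of_has_deriv_right_zero
      (fun x hx => ((hud x hx.1).continuousAt).continuousWithinAt)
      (fun x hx => (hud x hx.1).hasDerivWithinAt) t (Set.mem_Icc.mpr ⟨ht, le_rfl⟩)
  intro t ht
  exact ⟨hspos t ht, hipos t ht, hr0.trans (hrmono t ht), (hsumconst t ht) ▸ hsum⟩
end

section
/- For a SIR-PH model with R₀ = α V⁻¹ b > 0, the quantity z(t) = Y(t) + s(t) - (1/R₀) log(s(t)), where Y(t) = (1/R₀) i(t) V⁻¹ b, is constant along solutions with s(t) > 0. -/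
open Matrix

/-- SIR-PH: z(t) = Y(t) + s(t) - (1/R₀) log s(t) is constant along solutions. -/
theorem sirph_invariant
    (n : ℕ) (s : ℝ → ℝ) (i : ℝ → Fin n → ℝ)
    (α b : Fin n → ℝ) (V : Matrix (Fin n) (Fin n) ℝ)
    (hα : ∀ k, 0 ≤ α k) (hα1 : ∑ k, α k = 1)
    (hV : IsUnit V.det)
    (R₀ : ℝ) (hR₀ : R₀ = (Matrix.vecMul α V⁻¹) ⬝ᵥ b) (hR₀pos : 0 < R₀)
    (hspos : ∀ t, 0 < s t)
    (hs : ∀ t, HasDerivAt s (-(s t * (i t ⬝ᵥ b))) t)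
    (hi : ∀ t k, HasDerivAt (fun u => i u k)
        (s t * (i t ⬝ᵥ b) * α k - Matrix.vecMul (i t) V k) t) :
    ∀ t, (1 / R₀) * ((Matrix.vecMul (i t) V⁻¹) ⬝ᵥ b) + s t
          - (1 / R₀) * Real.log (s t)
        = (1 / R₀) * ((Matrix.vecMul (i 0) V⁻¹) ⬝ᵥ b) + s 0
          - (1 / R₀) * Real.log (s 0) := by
  set c : Fin n → ℝ := V⁻¹ *ᵥ b with hc
  have hR0ne : R₀ ≠ 0 := ne_of_gt hR₀pos
  have hac : α ⬝ᵥ c = R₀ := by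
    rw [hc, Matrix.dotProduct_mulVec, hR₀]
  have hVc : V *ᵥ c = b := by
    rw [hc, Matrix.mulVec_mulVec, Matrix.mul_nonsing_inv V hV, Matrix.one_mulVec]
  set f : ℝ → ℝ := fun t => (1 / R₀) * ((Matrix.vecMul (i t) V⁻¹) ⬝ᵥ b) + s t
      - (1 / R₀) * Real.log (s t) with hf
  have key : ∀ t, HasDerivAt f 0 t := by
    intro t
    have hY : HasDerivAt (fun u => (Matrix.vecMul (i u) V⁻¹) ⬝ᵥ b)
        (s t * (i t ⬝ᵥ b) * R₀ - i t ⬝ᵥ b) t := by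
      have h1 : ∀ u, (Matrix.vecMul (i u) V⁻¹) ⬝ᵥ b = ∑ j, i u j * c j := by
        intro u
        rw [← Matrix.dotProduct_mulVec, ← hc]
        rfl
      have h2 : HasDerivAt (fun u => ∑ j, i u j * c j)
          (∑ j, (s t * (i t ⬝ᵥ b) * α j - Matrix.vecMul (i t) V j) * c j) t :=
        HasDerivAt.fun_sum fun j _ => (hi t j).mul_const (c j)
      have h3 : (∑ j, (s t * (i t ⬝ᵥ b) * α j - Matrix.vecMul (i t) V j) * c j)
          = s t * (i t ⬝ᵥ b) * R₀ - i t ⬝ᵥ b := by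
        have : (∑ j, (s t * (i t ⬝ᵥ b) * α j - Matrix.vecMul (i t) V j) * c j)
            = s t * (i t ⬝ᵥ b) * (α ⬝ᵥ c) - (Matrix.vecMul (i t) V) ⬝ᵥ c := by
          simp only [sub_mul, Finset.sum_sub_distrib, dotProduct,
            Finset.mul_sum]
          ring_nf
        rw [this, hac, ← Matrix.dotProduct_mulVec, hVc]
      rw [← h3]
      exact h2.congr_deriv rfl |>.congr_of_eventuallyEq (by
        filter_upwards with u using (h1 u))
    have hlog : HasDerivAt (fun u => Real.log (s u))
        (-(s t * (i t ⬝ᵥ b)) / s t) t := (hs t).log (ne_of_gt (hspos t))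
    have := (((hY.const_mul (1 / R₀)).add (hs t)).sub (hlog.const_mul (1 / R₀)))
    refine this.congr_deriv ?_
    have hsne : s t ≠ 0 := (hspos t).ne'
    field_simp
    ring
  intro t
  have : ∀ u, f u = f 0 := by
    intro u
    have hdiff : Differentiable ℝ f := fun x => (key x).differentiableAt
    exact is_const_of_deriv_eq_zero hdiff (fun x => (key x).deriv) u 0
  exact this t
end

section
/- For a SIR-PH model, the quantity Z(t) = s(t)·exp(-R₀(s(t) + Y(t))) is constant along solutions, where Y(t) = (1/R₀)·i(t)·V⁻¹·b and R₀ = α V⁻¹ b > 0. -/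
open Matrix

/-- SIR-PH: Z(t) = s(t)·exp(-R₀(s(t)+Y(t))) is constant along solutions. -/
theorem sirph_Z_invariant
    (n : ℕ) (s : ℝ → ℝ) (i : ℝ → Fin n → ℝ)
    (α b : Fin n → ℝ) (V : Matrix (Fin n) (Fin n) ℝ)
    (hα : ∀ k, 0 ≤ α k) (hα1 : ∑ k, α k = 1)
    (hV : IsUnit V.det)
    (R₀ : ℝ) (hR₀ : R₀ = (Matrix.vecMul α V⁻¹) ⬝ᵥ b) (hR₀pos : 0 < R₀)
    (hspos : ∀ t, 0 < s t)
    (hs : ∀ t, HasDerivAt s (-(s t * (i t ⬝ᵥ b))) t)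
    (hi : ∀ t k, HasDerivAt (fun u => i u k)
        (s t * (i t ⬝ᵥ b) * α k - Matrix.vecMul (i t) V k) t) :
    ∀ t, s t * Real.exp (-R₀ * (s t + (1 / R₀) * ((Matrix.vecMul (i t) V⁻¹) ⬝ᵥ b)))
        = s 0 * Real.exp (-R₀ * (s 0 + (1 / R₀) * ((Matrix.vecMul (i 0) V⁻¹) ⬝ᵥ b))) := by
  set c : Fin n → ℝ := V⁻¹ *ᵥ b with hc
  have hcdot : ∀ x : Fin n → ℝ, Matrix.vecMul x V⁻¹ ⬝ᵥ b = x ⬝ᵥ c := by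
    intro x; rw [hc, Matrix.dotProduct_mulVec]
  have hαc : α ⬝ᵥ c = R₀ := by rw [hR₀, hcdot]
  have hVc : ∀ x : Fin n → ℝ, Matrix.vecMul x V ⬝ᵥ c = x ⬝ᵥ b := by
    intro x
    rw [hc, ← Matrix.dotProduct_mulVec, Matrix.mulVec_mulVec,
      Matrix.mul_nonsing_inv V hV, Matrix.one_mulVec]
  -- derivative of Y t = i t ⬝ᵥ c
  have hY : ∀ t, HasDerivAt (fun u => i u ⬝ᵥ c)
      (s t * (i t ⬝ᵥ b) * R₀ - i t ⬝ᵥ b) t := by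
    intro t
    have h : HasDerivAt (fun u => ∑ k, i u k * c k)
        (∑ k, (s t * (i t ⬝ᵥ b) * α k - Matrix.vecMul (i t) V k) * c k) t :=
      HasDerivAt.fun_sum fun k _ => (hi t k).mul_const (c k)
    have heq : (∑ k, (s t * (i t ⬝ᵥ b) * α k - Matrix.vecMul (i t) V k) * c k)
        = s t * (i t ⬝ᵥ b) * R₀ - i t ⬝ᵥ b := by
      have : (∑ k, (s t * (i t ⬝ᵥ b) * α k - Matrix.vecMul (i t) V k) * c k)
          = s t * (i t ⬝ᵥ b) * (α ⬝ᵥ c) - Matrix.vecMul (i t) V ⬝ᵥ c := by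
        simp [dotProduct, Finset.mul_sum, Finset.sum_sub_distrib, sub_mul, mul_assoc]
      rw [this, hαc, hVc]
    rw [heq] at h
    exact h
  -- derivative of Z
  have hZ : ∀ t, HasDerivAt (fun u => s u * Real.exp (-R₀ * (s u + (1 / R₀) * (i u ⬝ᵥ c)))) 0 t := by
    intro t
    have hE : HasDerivAt (fun u => -R₀ * (s u + (1 / R₀) * (i u ⬝ᵥ c)))
        (-R₀ * (-(s t * (i t ⬝ᵥ b)) + (1 / R₀) * (s t * (i t ⬝ᵥ b) * R₀ - i t ⬝ᵥ b))) t :=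
      (((hs t).add ((hY t).const_mul (1 / R₀))).const_mul (-R₀))
    have hexp := hE.exp
    have h := (hs t).mul hexp
    have : (-(s t * (i t ⬝ᵥ b)) * Real.exp (-R₀ * (s t + (1 / R₀) * (i t ⬝ᵥ c))) +
        s t * (Real.exp (-R₀ * (s t + (1 / R₀) * (i t ⬝ᵥ c))) *
          (-R₀ * (-(s t * (i t ⬝ᵥ b)) + (1 / R₀) * (s t * (i t ⬝ᵥ b) * R₀ - i t ⬝ᵥ b))))) = 0 := by
      field_simp
      ring
    rw [this] at h
    exact h
  intro t
  have hconst := is_const_of_deriv_eq_zero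
    (f := fun u => s u * Real.exp (-R₀ * (s u + (1 / R₀) * (i u ⬝ᵥ c))))
    (fun u => ((hZ u).differentiableAt)) (fun u => (hZ u).deriv) t 0
  simpa only [hcdot] using hconst
end

section
/- For a SIR-PH model, if on [a,b] the solution has s > 0, then (J_a - J_b)·V⁻¹·b = log(s(a)/s(b)), where J_t = i(t) + s(t)·α. -/
open Matrix

/-- SIR-PH: if s > 0 on [a,b], then (J_a - J_b)·V⁻¹·b = log(s(a)/s(b)),
where J_t = i(t) + s(t)·α. -/
theorem sirph_log_ratio
    (n : ℕ) (s : ℝ → ℝ) (i : ℝ → Fin n → ℝ)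
    (α b : Fin n → ℝ) (V : Matrix (Fin n) (Fin n) ℝ)
    (hα : ∀ k, 0 ≤ α k) (hα1 : ∑ k, α k = 1)
    (hV : IsUnit V.det)
    (hscont : Continuous s) (hicont : ∀ k, Continuous fun t => i t k)
    (hs : ∀ t, HasDerivAt s (-(s t * (i t ⬝ᵥ b))) t)
    (hi : ∀ t k, HasDerivAt (fun u => i u k)
        (s t * (i t ⬝ᵥ b) * α k - Matrix.vecMul (i t) V k) t)
    (a c : ℝ) (hac : a ≤ c)
    (hspos : ∀ t ∈ Set.Icc a c, 0 < s t) :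
    (Matrix.vecMul
        (fun k => (i a k + s a * α k) - (i c k + s c * α k)) V⁻¹) ⬝ᵥ b
      = Real.log (s a / s c) := by
  have hfcont : Continuous fun t => i t ⬝ᵥ b := by
    simp only [dotProduct]
    exact continuous_finset_sum _ fun k _ => (hicont k).mul continuous_const
  have hVcont : ∀ k, Continuous fun t => Matrix.vecMul (i t) V k := by
    intro k
    simp only [Matrix.vecMul, dotProduct]
    exact continuous_finset_sum _ fun j _ => (hicont j).mul continuous_const
  have hsa : s a ≠ 0 := (hspos a ⟨le_refl a, hac⟩).ne'
  have hsc : s c ≠ 0 := (hspos c ⟨hac, le_refl c⟩).ne'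
  -- log identity
  have hlog : ∫ t in a..c, -(i t ⬝ᵥ b) = Real.log (s c) - Real.log (s a) := by
    apply intervalIntegral.integral_eq_sub_of_hasDerivAt
    · intro t ht
      rw [Set.uIcc_of_le hac] at ht
      have hst : s t ≠ 0 := (hspos t ht).ne'
      have h := (hs t).log hst
      refine h.congr_deriv ?_
      rw [div_eq_iff hst]
      ring
    · exact hfcont.neg.intervalIntegrable a c
  -- s integral
  have h2 : ∫ t in a..c, -(s t * (i t ⬝ᵥ b)) = s c - s a :=
    intervalIntegral.integral_eq_sub_of_hasDerivAt (fun t _ => hs t)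
      ((hscont.mul hfcont).neg.intervalIntegrable a c)
  have h2' : ∫ t in a..c, s t * (i t ⬝ᵥ b) = s a - s c := by
    rw [intervalIntegral.integral_neg] at h2; linarith
  -- componentwise
  have hIeq : ∀ k, (i a k + s a * α k) - (i c k + s c * α k)
      = ∫ t in a..c, Matrix.vecMul (i t) V k := by
    intro k
    have h1 : ∫ t in a..c,
        (s t * (i t ⬝ᵥ b) * α k - Matrix.vecMul (i t) V k) = i c k - i a k :=
      intervalIntegral.integral_eq_sub_of_hasDerivAt (fun t _ => hi t k)
        (((hscont.mul hfcont).mul continuous_const).sub (hVcont k)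
          |>.intervalIntegrable a c)
    have h3 : ∫ t in a..c, s t * (i t ⬝ᵥ b) * α k = (s a - s c) * α k := by
      rw [intervalIntegral.integral_mul_const, h2']
    have hsub : ∫ t in a..c,
        (s t * (i t ⬝ᵥ b) * α k - Matrix.vecMul (i t) V k)
        = (∫ t in a..c, s t * (i t ⬝ᵥ b) * α k)
          - ∫ t in a..c, Matrix.vecMul (i t) V k :=
      intervalIntegral.integral_sub
        (((hscont.mul hfcont).mul continuous_const).intervalIntegrable a c)
        ((hVcont k).intervalIntegrable a c)
    rw [h1, h3] at hsub
    linarith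
  set Iv : Fin n → ℝ := fun k => ∫ t in a..c, i t k with hIv
  have hvm : ∀ k, Matrix.vecMul Iv V k = ∫ t in a..c, Matrix.vecMul (i t) V k := by
    intro k
    simp only [Matrix.vecMul, dotProduct, hIv]
    rw [intervalIntegral.integral_finset_sum (f := fun j t => i t j * V j k)
      (fun j _ => ((hicont j).mul continuous_const).intervalIntegrable a c)]
    exact Finset.sum_congr rfl fun j _ =>
      (intervalIntegral.integral_mul_const _ _).symm
  have hJ : (fun k => (i a k + s a * α k) - (i c k + s c * α k))
      = Matrix.vecMul Iv V := by
    funext k; rw [hvm k]; exact hIeq k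
  rw [hJ, Matrix.vecMul_vecMul, Matrix.mul_nonsing_inv V hV, Matrix.vecMul_one]
  have hIb : Iv ⬝ᵥ b = ∫ t in a..c, i t ⬝ᵥ b := by
    simp only [dotProduct, hIv]
    rw [intervalIntegral.integral_finset_sum (f := fun j t => i t j * b j)
      (fun j _ => ((hicont j).mul continuous_const).intervalIntegrable a c)]
    exact Finset.sum_congr rfl fun j _ =>
      (intervalIntegral.integral_mul_const _ _).symm
  rw [intervalIntegral.integral_neg] at hlog
  rw [hIb, Real.log_div hsa hsc]
  linarith
end

section
/- For a SIR-PH model whose solution converges as t→∞ with i(∞) = 0 and s(∞) = s_∞ > 0, the final size satisfies log(s₀/s_∞) = R₀(s₀ - s_∞) + i₀·V⁻¹·b, where R₀ = α V⁻¹ b. -/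
open Matrix Filter

/-- SIR-PH final size: log(s₀/s_∞) = R₀(s₀ - s_∞) + i₀·V⁻¹·b. -/
theorem sirph_final_size
    (n : ℕ) (s : ℝ → ℝ) (i : ℝ → Fin n → ℝ)
    (α b : Fin n → ℝ) (V : Matrix (Fin n) (Fin n) ℝ)
    (hα : ∀ k, 0 ≤ α k) (hα1 : ∑ k, α k = 1)
    (hV : IsUnit V.det)
    (R₀ : ℝ) (hR₀ : R₀ = (Matrix.vecMul α V⁻¹) ⬝ᵥ b) (hR₀pos : 0 < R₀)
    (hspos : ∀ t, 0 ≤ t → 0 < s t)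
    (hs : ∀ t, 0 ≤ t → HasDerivAt s (-(s t * (i t ⬝ᵥ b))) t)
    (hi : ∀ t, 0 ≤ t → ∀ k, HasDerivAt (fun u => i u k)
        (s t * (i t ⬝ᵥ b) * α k - Matrix.vecMul (i t) V k) t)
    (sInf : ℝ) (hsInf : 0 < sInf)
    (hslim : Tendsto s atTop (nhds sInf))
    (hilim : ∀ k, Tendsto (fun t => i t k) atTop (nhds 0)) :
    Real.log (s 0 / sInf)
      = R₀ * (s 0 - sInf) + (Matrix.vecMul (i 0) V⁻¹) ⬝ᵥ b := by
  set c : Fin n → ℝ := V⁻¹ *ᵥ b with hc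
  set F : ℝ → ℝ := fun t => (i t ⬝ᵥ c) + R₀ * s t - Real.log (s t) with hF
  -- derivative of F is zero on [0,∞)
  have hFderiv : ∀ t, 0 ≤ t → HasDerivAt F 0 t := by
    intro t ht
    have hY : HasDerivAt (fun u => i u ⬝ᵥ c)
        (s t * (i t ⬝ᵥ b) * R₀ - (i t ⬝ᵥ b)) t := by
      have h1 : HasDerivAt (fun u => ∑ k, i u k * c k)
          (∑ k, (s t * (i t ⬝ᵥ b) * α k - Matrix.vecMul (i t) V k) * c k) t := by
        apply HasDerivAt.fun_sum
        intro k _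
        exact (hi t ht k).mul_const (c k)
      have h2 : (∑ k, (s t * (i t ⬝ᵥ b) * α k - Matrix.vecMul (i t) V k) * c k)
          = s t * (i t ⬝ᵥ b) * R₀ - (i t ⬝ᵥ b) := by
        have hac : α ⬝ᵥ c = R₀ := by
          rw [hR₀, hc, Matrix.dotProduct_mulVec]
        have hwc : Matrix.vecMul (i t) V ⬝ᵥ c = i t ⬝ᵥ b := by
          rw [hc, ← Matrix.dotProduct_mulVec, Matrix.mulVec_mulVec,
            Matrix.mul_nonsing_inv V hV, Matrix.one_mulVec]
        calc (∑ k, (s t * (i t ⬝ᵥ b) * α k - Matrix.vecMul (i t) V k) * c k)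
            = s t * (i t ⬝ᵥ b) * (∑ k, α k * c k)
                - ∑ k, Matrix.vecMul (i t) V k * c k := by
              rw [Finset.mul_sum, ← Finset.sum_sub_distrib]
              congr 1; ext k; ring
          _ = s t * (i t ⬝ᵥ b) * (α ⬝ᵥ c) - Matrix.vecMul (i t) V ⬝ᵥ c := rfl
          _ = s t * (i t ⬝ᵥ b) * R₀ - (i t ⬝ᵥ b) := by rw [hac, hwc]
      rw [← h2]
      exact h1
    have hlog : HasDerivAt (fun u => Real.log (s u)) (-(i t ⬝ᵥ b)) t := by
      have := (hs t ht).log (ne_of_gt (hspos t ht))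
      have hval : -(s t * (i t ⬝ᵥ b)) / s t = -(i t ⬝ᵥ b) := by
        rw [neg_div, mul_comm, mul_div_assoc, div_self (ne_of_gt (hspos t ht)), mul_one]
      rwa [hval] at this
    have := (hY.add ((hs t ht).const_mul R₀)).sub hlog
    have hval : s t * (i t ⬝ᵥ b) * R₀ - (i t ⬝ᵥ b) + R₀ * -(s t * (i t ⬝ᵥ b))
        - -(i t ⬝ᵥ b) = 0 := by ring
    rwa [hval] at this
  -- F is constant on [0, ∞)
  have hFconst : ∀ T, 0 ≤ T → F T = F 0 := by
    intro T hT
    have := constant_of_has_deriv_right_zero (f := F) (a := 0) (b := T)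
      (fun x hx => (hFderiv x hx.1).continuousAt.continuousWithinAt)
      (fun x hx => (hFderiv x hx.1).hasDerivWithinAt)
    exact this T ⟨hT, le_refl T⟩
  -- limits
  have hFlim : Tendsto F atTop (nhds ((0 : ℝ) + R₀ * sInf - Real.log sInf)) := by
    have h1 : Tendsto (fun t => i t ⬝ᵥ c) atTop (nhds 0) := by
      have : Tendsto (fun t => ∑ k, i t k * c k) atTop (nhds (∑ k : Fin n, 0 * c k)) :=
        tendsto_finset_sum _ (fun k _ => (hilim k).mul_const (c k))
      simpa [dotProduct] using this
    have h2 : Tendsto (fun t => R₀ * s t) atTop (nhds (R₀ * sInf)) :=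
      hslim.const_mul R₀
    have h3 : Tendsto (fun t => Real.log (s t)) atTop (nhds (Real.log sInf)) :=
      ((Real.continuousAt_log (ne_of_gt hsInf)).tendsto).comp hslim
    exact (h1.add h2).sub h3
  have hFlim0 : Tendsto F atTop (nhds (F 0)) := by
    have : F =ᶠ[atTop] (fun _ => F 0) := by
      filter_upwards [eventually_ge_atTop (0 : ℝ)] with t ht using hFconst t ht
    exact Tendsto.congr' this.symm tendsto_const_nhds
  have hkey : F 0 = (0 : ℝ) + R₀ * sInf - Real.log sInf :=
    tendsto_nhds_unique hFlim0 hFlim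
  have hdc : (Matrix.vecMul (i 0) V⁻¹) ⬝ᵥ b = i 0 ⬝ᵥ c := by
    rw [hc, Matrix.dotProduct_mulVec]
  have hlogdiv : Real.log (s 0 / sInf) = Real.log (s 0) - Real.log sInf :=
    Real.log_div (ne_of_gt (hspos 0 le_rfl)) (ne_of_gt hsInf)
  simp only [hF] at hkey
  rw [hlogdiv, hdc]
  linarith
end

section
/- For a SIR-PH model with limits i(∞) = 0 and s(∞) = s_∞, the total integrated infectives I^{(∞)} = ∫₀^∞ i(u) du satisfy I^{(∞)}·V = i₀ + (s₀ - s_∞)·α. -/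
open Matrix Filter

/-- SIR-PH: total integrated infectives satisfy I^{(∞)}·V = i₀ + (s₀ - s_∞)·α. -/
theorem sirph_total_integrated_infectives
    (n : ℕ) (s : ℝ → ℝ) (i : ℝ → Fin n → ℝ)
    (α b : Fin n → ℝ) (V : Matrix (Fin n) (Fin n) ℝ)
    (hα : ∀ k, 0 ≤ α k) (hα1 : ∑ k, α k = 1)
    (hscont : Continuous s) (hicont : ∀ k, Continuous fun t => i t k)
    (hs : ∀ t, 0 ≤ t → HasDerivAt s (-(s t * (i t ⬝ᵥ b))) t)
    (hi : ∀ t, 0 ≤ t → ∀ k, HasDerivAt (fun u => i u k)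
        (s t * (i t ⬝ᵥ b) * α k - Matrix.vecMul (i t) V k) t)
    (sInf : ℝ)
    (hslim : Tendsto s atTop (nhds sInf))
    (hilim : ∀ k, Tendsto (fun t => i t k) atTop (nhds 0))
    (hint : ∀ k, MeasureTheory.IntegrableOn (fun u => i u k) (Set.Ioi 0)) :
    ∀ j, Matrix.vecMul (fun k => ∫ u in Set.Ioi 0, i u k) V j
        = i 0 j + (s 0 - sInf) * α j := by
  intro j
  -- integrability of t ↦ vecMul (i t) V j
  have hintg : MeasureTheory.IntegrableOn (fun u => Matrix.vecMul (i u) V j)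
      (Set.Ioi 0) := by
    have : MeasureTheory.IntegrableOn (fun u => ∑ k, i u k * V k j) (Set.Ioi 0) :=
      MeasureTheory.integrable_finset_sum _ (fun k _ => (hint k).mul_const _)
    simpa [Matrix.vecMul, dotProduct] using this
  -- f t = i t j + s t * α j
  set f : ℝ → ℝ := fun t => i t j + s t * α j with hf
  have hderiv : ∀ x ∈ Set.Ioi (0:ℝ), HasDerivAt f (-(Matrix.vecMul (i x) V j)) x := by
    intro x hx
    have hx' : (0:ℝ) ≤ x := le_of_lt hx
    have h1 := (hi x hx' j).add ((hs x hx').mul_const (α j))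
    refine (h1 : HasDerivAt f _ x).congr_deriv ?_
    ring
  have hcont : ContinuousWithinAt f (Set.Ici 0) 0 :=
    (((hicont j).add (hscont.mul continuous_const)).continuousAt).continuousWithinAt
  have htend : Tendsto f atTop (nhds (0 + sInf * α j)) :=
    (hilim j).add (hslim.mul_const (α j))
  have hkey := MeasureTheory.integral_Ioi_of_hasDerivAt_of_tendsto hcont hderiv
    hintg.neg htend
  have h2 : ∫ u in Set.Ioi 0, Matrix.vecMul (i u) V j
      = i 0 j + (s 0 - sInf) * α j := by
    have := hkey
    simp only [MeasureTheory.integral_neg] at this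
    have : ∫ u in Set.Ioi 0, Matrix.vecMul (i u) V j
        = -((0 + sInf * α j) - f 0) := by linarith
    rw [this]; simp [hf]; ring
  rw [← h2]
  have : (fun u => Matrix.vecMul (i u) V j) = fun u => ∑ k, i u k * V k j := by
    funext u; simp [Matrix.vecMul, dotProduct]
  rw [this, MeasureTheory.integral_finset_sum _ (fun k _ => (hint k).mul_const _)]
  simp [Matrix.vecMul, dotProduct, MeasureTheory.integral_mul_const]
end

section
/- For a SIR-PH model with removed classes r'(t) = i(t)·W, where W = V·V⁻¹·W, the final size of the removed classes satisfies r_∞ - r₀ = (i₀ + (s₀ - s_∞)·α)·V⁻¹·W. -/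
open Matrix Filter MeasureTheory

/-- SIR-PH: final size of removed classes:
r_∞ - r₀ = (i₀ + (s₀ - s_∞)·α)·V⁻¹·W. -/
theorem sirph_removed_final_size
    (n p : ℕ) (s : ℝ → ℝ) (i : ℝ → Fin n → ℝ) (r : ℝ → Fin p → ℝ)
    (α b : Fin n → ℝ) (V : Matrix (Fin n) (Fin n) ℝ)
    (W : Matrix (Fin n) (Fin p) ℝ)
    (hα : ∀ k, 0 ≤ α k) (hα1 : ∑ k, α k = 1)
    (hV : IsUnit V.det)
    (hscont : Continuous s) (hicont : ∀ k, Continuous fun t => i t k)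
    (hs : ∀ t, 0 ≤ t → HasDerivAt s (-(s t * (i t ⬝ᵥ b))) t)
    (hi : ∀ t, 0 ≤ t → ∀ k, HasDerivAt (fun u => i u k)
        (s t * (i t ⬝ᵥ b) * α k - Matrix.vecMul (i t) V k) t)
    (hr : ∀ t, 0 ≤ t → ∀ j, HasDerivAt (fun u => r u j)
        (Matrix.vecMul (i t) W j) t)
    (sInf : ℝ) (rInf : Fin p → ℝ)
    (hslim : Tendsto s atTop (nhds sInf))
    (hilim : ∀ k, Tendsto (fun t => i t k) atTop (nhds 0))
    (hrlim : ∀ j, Tendsto (fun t => r t j) atTop (nhds (rInf j)))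
    (hint : ∀ k, MeasureTheory.IntegrableOn (fun u => i u k) (Set.Ioi 0)) :
    ∀ j, rInf j - r 0 j
        = Matrix.vecMul
            (Matrix.vecMul (fun k => i 0 k + (s 0 - sInf) * α k) V⁻¹) W j := by
  -- integrability of i ⬝ᵥ b
  have hib_int : IntegrableOn (fun t => i t ⬝ᵥ b) (Set.Ioi 0) := by
    simp only [dotProduct]
    exact integrable_finset_sum _ (fun k _ => (hint k).mul_const _)
  -- bound on s on [0, ∞)
  obtain ⟨T, hT⟩ := Metric.tendsto_atTop.mp hslim 1 one_pos
  obtain ⟨C, hC⟩ := (isCompact_Icc (a := (0:ℝ)) (b := max T 0)).exists_bound_of_continuousOn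
    hscont.continuousOn
  have hbound : ∀ t : ℝ, 0 ≤ t → ‖s t‖ ≤ max C (|sInf| + 1) := by
    intro t ht
    rcases le_total t (max T 0) with h | h
    · exact le_max_of_le_left (hC t ⟨ht, h⟩)
    · have h1 := hT t (le_trans (le_max_left _ _) h)
      rw [Real.dist_eq] at h1
      have h2 : |s t| ≤ |sInf| + 1 := by
        have := abs_sub_abs_le_abs_sub (s t) sInf
        linarith [h1.le]
      simpa [Real.norm_eq_abs] using le_max_of_le_right h2
  -- integrability of s * (i ⬝ᵥ b)
  have hf_int : IntegrableOn (fun t => s t * (i t ⬝ᵥ b)) (Set.Ioi 0) := by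
    apply hib_int.bdd_mul (hscont.aestronglyMeasurable.restrict)
    filter_upwards [ae_restrict_mem measurableSet_Ioi] with t ht
    exact hbound t ht.le
  -- FTC for s
  have hs_eq : ∫ t in Set.Ioi (0:ℝ), s t * (i t ⬝ᵥ b) = s 0 - sInf := by
    have h := integral_Ioi_of_hasDerivAt_of_tendsto' (fun t ht => hs t ht) hf_int.neg hslim
    rw [integral_neg] at h
    linarith
  -- integrability of vecMul i V k
  have hvecV_int : ∀ k, IntegrableOn (fun t => Matrix.vecMul (i t) V k) (Set.Ioi 0) := by
    intro k
    simp only [Matrix.vecMul, dotProduct]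
    exact integrable_finset_sum _ (fun l _ => (hint l).mul_const _)
  set I : Fin n → ℝ := fun k => ∫ t in Set.Ioi (0:ℝ), i t k with hI
  -- FTC for i
  have hIV : ∀ k, Matrix.vecMul I V k = i 0 k + (s 0 - sInf) * α k := by
    intro k
    have h := integral_Ioi_of_hasDerivAt_of_tendsto' (f' := fun t =>
        s t * (i t ⬝ᵥ b) * α k - Matrix.vecMul (i t) V k)
      (fun t ht => hi t ht k) ((hf_int.mul_const _).sub (hvecV_int k)) (hilim k)
    rw [integral_sub (hf_int.mul_const _) (hvecV_int k), integral_mul_const, hs_eq] at h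
    have hV_int : ∫ t in Set.Ioi (0:ℝ), Matrix.vecMul (i t) V k = Matrix.vecMul I V k := by
      simp only [Matrix.vecMul, dotProduct]
      rw [integral_finset_sum _ (fun l _ => (hint l).mul_const _)]
      exact Finset.sum_congr rfl fun l _ => integral_mul_const _ _
    rw [hV_int] at h
    linarith
  -- FTC for r
  have hIW : ∀ j, rInf j - r 0 j = Matrix.vecMul I W j := by
    intro j
    have hW_int : IntegrableOn (fun t => Matrix.vecMul (i t) W j) (Set.Ioi 0) := by
      simp only [Matrix.vecMul, dotProduct]
      exact integrable_finset_sum _ (fun l _ => (hint l).mul_const _)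
    have h := integral_Ioi_of_hasDerivAt_of_tendsto' (fun t ht => hr t ht j) hW_int (hrlim j)
    rw [← h]
    simp only [Matrix.vecMul, dotProduct]
    rw [integral_finset_sum _ (fun l _ => (hint l).mul_const _)]
    exact Finset.sum_congr rfl fun l _ => integral_mul_const _ _
  intro j
  have hv : (fun k => i 0 k + (s 0 - sInf) * α k) = Matrix.vecMul I V := funext fun k => (hIV k).symm
  rw [hv, show (Matrix.vecMul I V) ᵥ* V⁻¹ = I from by
    rw [Matrix.vecMul_vecMul, Matrix.mul_nonsing_inv V hV, Matrix.vecMul_one], hIW j]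
end

section
/- For a SIR-PH model with R₀ = α V⁻¹ b > 1, s₀ R₀ > 1, and Y₀ = (1/R₀) i₀ V⁻¹ b, the maximal value of Y along a trajectory that reaches s = 1/R₀ equals Y₀ + s₀ - (1 + log(s₀ R₀))/R₀. -/
open Matrix

/-- SIR-PH: with R₀ > 1, s₀R₀ > 1, the maximal value of Y along a trajectory
reaching s = 1/R₀ equals Y₀ + s₀ - (1 + log(s₀R₀))/R₀. -/
theorem sirph_Ymax
    (n : ℕ) (s : ℝ → ℝ) (i : ℝ → Fin n → ℝ)
    (α b : Fin n → ℝ) (V : Matrix (Fin n) (Fin n) ℝ)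
    (hα : ∀ k, 0 ≤ α k) (hα1 : ∑ k, α k = 1)
    (hV : IsUnit V.det)
    (R₀ : ℝ) (hR₀ : R₀ = (Matrix.vecMul α V⁻¹) ⬝ᵥ b) (hR₀gt : 1 < R₀)
    (hs₀R₀ : 1 < s 0 * R₀)
    (hspos : ∀ t, 0 ≤ t → 0 < s t)
    (hs : ∀ t, 0 ≤ t → HasDerivAt s (-(s t * (i t ⬝ᵥ b))) t)
    (hi : ∀ t, 0 ≤ t → ∀ k, HasDerivAt (fun u => i u k)
        (s t * (i t ⬝ᵥ b) * α k - Matrix.vecMul (i t) V k) t)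
    (Y : ℝ → ℝ) (hY : ∀ t, Y t = (1 / R₀) * ((Matrix.vecMul (i t) V⁻¹) ⬝ᵥ b))
    (tstar : ℝ) (htstar : 0 ≤ tstar) (hstar : s tstar = 1 / R₀) :
    (∀ t, 0 ≤ t → Y t ≤ Y 0 + s 0 - (1 + Real.log (s 0 * R₀)) / R₀) ∧
      Y tstar = Y 0 + s 0 - (1 + Real.log (s 0 * R₀)) / R₀ := by
  have hR₀pos : (0:ℝ) < R₀ := lt_trans one_pos hR₀gt
  have hR₀ne : R₀ ≠ 0 := ne_of_gt hR₀pos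
  set c : Fin n → ℝ := V⁻¹ *ᵥ b with hc
  have hYc : ∀ t, Y t = (1/R₀) * (∑ j, i t j * c j) := by
    intro t
    rw [hY t, ← Matrix.dotProduct_mulVec]
    rfl
  have hVc : V *ᵥ c = b := by
    rw [hc, Matrix.mulVec_mulVec, Matrix.mul_nonsing_inv V hV, Matrix.one_mulVec]
  have hαc : ∑ j, α j * c j = R₀ := by
    rw [hR₀, ← Matrix.dotProduct_mulVec]; rfl
  have hYd : ∀ t, 0 ≤ t → HasDerivAt Y ((s t - 1/R₀) * (i t ⬝ᵥ b)) t := by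
    intro t ht
    have h1 : HasDerivAt (fun u => (1/R₀) * ∑ j, i u j * c j)
        ((1/R₀) * ∑ j, (s t * (i t ⬝ᵥ b) * α j - Matrix.vecMul (i t) V j) * c j) t := by
      refine HasDerivAt.const_mul _ (HasDerivAt.fun_sum ?_)
      intro j _
      exact (hi t ht j).mul_const _
    have hiVc : ∑ j, Matrix.vecMul (i t) V j * c j = i t ⬝ᵥ b := by
      have h2 : Matrix.vecMul (i t) V ⬝ᵥ c = i t ⬝ᵥ (V *ᵥ c) :=
        (Matrix.dotProduct_mulVec _ _ _).symm
      rw [hVc] at h2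
      exact h2
    have hsum : (1/R₀) * ∑ j, (s t * (i t ⬝ᵥ b) * α j - Matrix.vecMul (i t) V j) * c j
        = (s t - 1/R₀) * (i t ⬝ᵥ b) := by
      have : ∑ j, (s t * (i t ⬝ᵥ b) * α j - Matrix.vecMul (i t) V j) * c j
          = s t * (i t ⬝ᵥ b) * (∑ j, α j * c j) - ∑ j, Matrix.vecMul (i t) V j * c j := by
        simp only [sub_mul]
        rw [Finset.sum_sub_distrib, Finset.mul_sum]
        congr 1
        exact Finset.sum_congr rfl fun j _ => by ring
      rw [this, hαc, hiVc]
      field_simp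
    have h3 : Y = fun u => (1/R₀) * ∑ j, i u j * c j := funext hYc
    rw [h3, ← hsum]
    exact h1
  have hsne : ∀ t, 0 ≤ t → s t ≠ 0 := fun t ht => (hspos t ht).ne'
  set F : ℝ → ℝ := fun t => Y t + s t - (1/R₀) * Real.log (s t) with hF
  have hFd : ∀ t, 0 ≤ t → HasDerivAt F 0 t := by
    intro t ht
    have h := ((hYd t ht).add (hs t ht)).sub
      (HasDerivAt.const_mul (1/R₀) ((hs t ht).log (hsne t ht)))
    refine h.congr_deriv ?_
    have hne := hsne t ht
    rw [neg_div, mul_div_cancel_left₀ _ hne]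
    ring
  have hFconst : ∀ t, 0 ≤ t → F t = F 0 := by
    intro t ht
    rcases eq_or_lt_of_le ht with h | h
    · rw [← h]
    · have := constant_of_has_deriv_right_zero (f := F) (a := 0) (b := t)
        (fun x hx => (hFd x hx.1).continuousAt.continuousWithinAt)
        (fun x hx => (hFd x hx.1).hasDerivWithinAt)
      exact this t ⟨ht, le_refl t⟩
  have hs0 : 0 < s 0 := hspos 0 le_rfl
  have hlogprod : Real.log (s 0 * R₀) = Real.log (s 0) + Real.log R₀ :=
    Real.log_mul hs0.ne' hR₀ne
  -- key rearrangement: for all t ≥ 0, Y t = F 0 - s t + (1/R₀) * log (s t)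
  have hYt : ∀ t, 0 ≤ t → Y t = F 0 - s t + (1/R₀) * Real.log (s t) := by
    intro t ht
    have := hFconst t ht
    simp only [hF] at this
    linarith
  have hF0 : F 0 = Y 0 + s 0 - (1/R₀) * Real.log (s 0) := rfl
  constructor
  · intro t ht
    have hx := hspos t ht
    have h1 : Real.log (s t * R₀) ≤ s t * R₀ - 1 :=
      Real.log_le_sub_one_of_pos (by positivity)
    rw [Real.log_mul hx.ne' hR₀ne] at h1
    rw [hYt t ht, hF0, hlogprod]
    have h2 : (1/R₀) * (Real.log (s t) + Real.log R₀) ≤ (1/R₀) * (s t * R₀ - 1) :=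
      mul_le_mul_of_nonneg_left h1 (by positivity)
    have h3 : (1/R₀) * (s t * R₀ - 1) = s t - 1/R₀ := by field_simp
    have h4 : (1 + (Real.log (s 0) + Real.log R₀)) / R₀
        = (1/R₀) + (1/R₀) * Real.log (s 0) + (1/R₀) * Real.log R₀ := by
      field_simp; ring
    rw [h3] at h2
    have h5 : (1/R₀) * Real.log (s t) ≤ s t - 1/R₀ - (1/R₀) * Real.log R₀ := by
      nlinarith
    linarith [h5, h4.le, h4.ge]
  · rw [hYt tstar htstar, hF0, hlogprod, hstar, one_div, Real.log_inv]
    field_simp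
    ring
end

section
/- For the SIRV model s' = -s(β i + γ_s), i' = i(β s - γ_i), the quantity μ(t) = β(s(t) + i(t)) - γ_i log(s(t)) + γ_s log(i(t)) is constant along solutions with s, i > 0. -/
/-- SIRV: μ(t) = β(s+i) - γ_i log s + γ_s log i is constant along solutions. -/
theorem sirv_invariant
    (β γs γi : ℝ) (hβ : 0 < β) (hγs : 0 < γs) (hγi : 0 < γi)
    (s i : ℝ → ℝ)
    (hspos : ∀ t, 0 < s t) (hipos : ∀ t, 0 < i t)
    (hs : ∀ t, HasDerivAt s (-(s t * (β * i t + γs))) t)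
    (hi : ∀ t, HasDerivAt i (i t * (β * s t - γi)) t) :
    ∀ t, β * (s t + i t) - γi * Real.log (s t) + γs * Real.log (i t)
        = β * (s 0 + i 0) - γi * Real.log (s 0) + γs * Real.log (i 0) := by
  have key : ∀ t, HasDerivAt
      (fun t => β * (s t + i t) - γi * Real.log (s t) + γs * Real.log (i t)) 0 t := by
    intro t
    have h1 : HasDerivAt (fun t => β * (s t + i t))
        (β * (-(s t * (β * i t + γs)) + i t * (β * s t - γi))) t :=
      (((hs t).add (hi t)).const_mul β)
    have h2 : HasDerivAt (fun t => Real.log (s t))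
        ((-(s t * (β * i t + γs))) / s t) t := (hs t).log (hspos t).ne'
    have h3 : HasDerivAt (fun t => Real.log (i t))
        ((i t * (β * s t - γi)) / i t) t := (hi t).log (hipos t).ne'
    have h := (h1.sub (h2.const_mul γi)).add (h3.const_mul γs)
    have hs0 := (hspos t).ne'
    have hi0 := (hipos t).ne'
    convert h using 1
    · rfl
    · rfl
    · rfl
    field_simp
    ring
  intro t
  have := is_const_of_deriv_eq_zero
    (f := fun t => β * (s t + i t) - γi * Real.log (s t) + γs * Real.log (i t))
    (fun x => (key x).differentiableAt) (fun x => (key x).deriv) t 0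
  simpa using this
end

section
/- For the multi-group SYR model, the effective contact rate a(t) = (Σ_k β_k s_k(t)) / (Σ_k s_k(t)) is non-increasing in t along solutions with all s_k(t) > 0 and y(t) ≥ 0. -/
/-- Multi-group SYR: the effective contact rate
a(t) = (Σ β_k s_k(t)) / (Σ s_k(t)) is non-increasing. -/
theorem multigroup_contact_rate_antitone
    (m : ℕ) (β : Fin m → ℝ) (hβ : ∀ k, 0 < β k)
    (s : ℝ → Fin m → ℝ) (y : ℝ → ℝ)
    (hy : ∀ t, 0 ≤ t → 0 ≤ y t)
    (hspos : ∀ t, 0 ≤ t → ∀ k, 0 < s t k)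
    (hs : ∀ t, 0 ≤ t → ∀ k,
        HasDerivAt (fun u => s u k) (-(β k * s t k * y t)) t) :
    AntitoneOn (fun t => (∑ k, β k * s t k) / (∑ k, s t k)) (Set.Ici 0) := by
  rcases Nat.eq_zero_or_pos m with hm | hm
  · subst hm
    simp only [Finset.univ_eq_empty, Finset.sum_empty, zero_div]
    exact fun a _ b _ _ => le_refl _
  have hne : (Finset.univ : Finset (Fin m)).Nonempty := (Finset.univ_nonempty_iff.mpr ⟨⟨0, hm⟩⟩)
  -- derivative of the ratio at each t ≥ 0
  have key : ∀ t : ℝ, 0 ≤ t →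
      HasDerivAt (fun u => (∑ k, β k * s u k) / (∑ k, s u k))
        (((∑ k, β k * -(β k * s t k * y t)) * (∑ k, s t k) -
          (∑ k, β k * s t k) * (∑ k, -(β k * s t k * y t))) / (∑ k, s t k) ^ 2) t := by
    intro t ht
    have hSpos : (0:ℝ) < ∑ k, s t k :=
      Finset.sum_pos (fun k _ => hspos t ht k) hne
    have hB : HasDerivAt (fun u => ∑ k, β k * s u k)
        (∑ k, β k * -(β k * s t k * y t)) t :=
      HasDerivAt.fun_sum fun k _ => (hs t ht k).const_mul (β k)
    have hS : HasDerivAt (fun u => ∑ k, s u k)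
        (∑ k, -(β k * s t k * y t)) t :=
      HasDerivAt.fun_sum fun k _ => hs t ht k
    exact hB.div hS hSpos.ne'
  -- the derivative is nonpositive
  have hnonpos : ∀ t : ℝ, 0 ≤ t →
      ((∑ k, β k * -(β k * s t k * y t)) * (∑ k, s t k) -
        (∑ k, β k * s t k) * (∑ k, -(β k * s t k * y t))) / (∑ k, s t k) ^ 2 ≤ 0 := by
    intro t ht
    apply div_nonpos_of_nonpos_of_nonneg _ (sq_nonneg _)
    have h1 : (∑ k, β k * -(β k * s t k * y t)) = -(y t) * ∑ k, β k ^ 2 * s t k := by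
      rw [Finset.mul_sum]
      exact Finset.sum_congr rfl fun k _ => by ring
    have h2 : (∑ k, -(β k * s t k * y t)) = -(y t) * ∑ k, β k * s t k := by
      rw [Finset.mul_sum]
      exact Finset.sum_congr rfl fun k _ => by ring
    rw [h1, h2]
    have hCS : (∑ k, β k * s t k) ^ 2 ≤ (∑ k, s t k) * ∑ k, β k ^ 2 * s t k := by
      have := Finset.sum_mul_sq_le_sq_mul_sq Finset.univ
        (fun k => Real.sqrt (s t k)) (fun k => β k * Real.sqrt (s t k))
      have e1 : ∀ k : Fin m, Real.sqrt (s t k) * (β k * Real.sqrt (s t k)) = β k * s t k := by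
        intro k
        rw [show Real.sqrt (s t k) * (β k * Real.sqrt (s t k))
            = β k * (Real.sqrt (s t k) * Real.sqrt (s t k)) by ring,
          Real.mul_self_sqrt (hspos t ht k).le]
      have e2 : ∀ k : Fin m, Real.sqrt (s t k) ^ 2 = s t k :=
        fun k => Real.sq_sqrt (hspos t ht k).le
      have e3 : ∀ k : Fin m, (β k * Real.sqrt (s t k)) ^ 2 = β k ^ 2 * s t k := by
        intro k; rw [mul_pow, e2]
      simpa only [e1, e2, e3] using this
    nlinarith [hy t ht, hCS]
  -- conclude
  have hderiv : ∀ t ∈ interior (Set.Ici (0:ℝ)),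
      deriv (fun u => (∑ k, β k * s u k) / (∑ k, s u k)) t ≤ 0 := by
    intro t ht
    rw [interior_Ici] at ht
    rw [(key t (le_of_lt ht)).deriv]
    exact hnonpos t (le_of_lt ht)
  apply antitoneOn_of_deriv_nonpos (convex_Ici 0)
  · exact fun t ht => (key t ht).continuousAt.continuousWithinAt
  · intro t ht
    rw [interior_Ici] at ht
    exact (key t (le_of_lt ht)).differentiableAt.differentiableWithinAt
  · exact hderiv
end
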